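/- Let α = Pa²/σ² > 0 and β = Qb²/σ² > 0, and define ξ = ((1 + α + β) − √((1 − α + β)² + 4α))/(2α). Then 0 < ξ < 1, and α(1 − ξ) = γ*₁,S3/1 where γ*₁,S3 = (−(σ² + Qb² − Pa²) + √((σ² + Qb² − Pa²)² + 4σ²Pa²))/(2σ²); equivalently, a²(P − Pξ)/σ² = γ*₁,S3. -/

import Mathlib

/-- Properties of `ξ`: it lies in `(0,1)`, and allocating power `Pξ` to UE2's
signal under scheme 4 gives UE1 exactly the SINR `γ*₁,S3` of scheme 3. -/
theorem stmt_15 (a b P Q σ2 : ℝ) (ha : 0 < a) (hb : 0 < b) (hP : 0 < P)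
    (hQ : 0 < Q) (hσ : 0 < σ2)
    (α β ξ γS3 : ℝ)
    (hα : α = P * a ^ 2 / σ2) (hβ : β = Q * b ^ 2 / σ2)
    (hξ : ξ = ((1 + α + β) - Real.sqrt ((1 - α + β) ^ 2 + 4 * α)) / (2 * α))
    (hγ : γS3 = (-(σ2 + Q * b ^ 2 - P * a ^ 2) +
      Real.sqrt ((σ2 + Q * b ^ 2 - P * a ^ 2) ^ 2 + 4 * σ2 * P * a ^ 2)) /
      (2 * σ2)) :
    (0 < ξ ∧ ξ < 1) ∧ α * (1 - ξ) = γS3 ∧ a ^ 2 * (P - P * ξ) / σ2 = γS3 := by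
  have hα0 : 0 < α := by rw [hα]; positivity
  have hβ0 : 0 < β := by rw [hβ]; positivity
  set s := Real.sqrt ((1 - α + β) ^ 2 + 4 * α) with hs
  have hD : (0:ℝ) ≤ (1 - α + β) ^ 2 + 4 * α := by positivity
  have hs2 : s ^ 2 = (1 - α + β) ^ 2 + 4 * α := Real.sq_sqrt hD
  have hs0 : 0 ≤ s := Real.sqrt_nonneg _
  -- the big sqrt equals σ2 * s
  have hkey : (σ2 + Q * b ^ 2 - P * a ^ 2) ^ 2 + 4 * σ2 * P * a ^ 2
      = σ2 ^ 2 * ((1 - α + β) ^ 2 + 4 * α) := by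
    rw [hα, hβ]; field_simp; ring
  have hbig : Real.sqrt ((σ2 + Q * b ^ 2 - P * a ^ 2) ^ 2 + 4 * σ2 * P * a ^ 2)
      = σ2 * s := by
    rw [hkey, hs, show σ2 ^ 2 * ((1 - α + β) ^ 2 + 4 * α)
        = (σ2 * Real.sqrt ((1 - α + β) ^ 2 + 4 * α)) ^ 2 by
      rw [mul_pow, Real.sq_sqrt hD],
      Real.sqrt_sq (by positivity)]
  have hQb : σ2 + Q * b ^ 2 - P * a ^ 2 = σ2 * (1 + β - α) := by
    rw [hα, hβ]; field_simp
  have hγ' : γS3 = (-(1 + β - α) + s) / 2 := by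
    rw [hγ, hbig, hQb]
    field_simp
  have hslt : s < 1 + α + β := by nlinarith [hs2, hα0, hβ0, hs0]
  have hsgt : 1 - α + β < s := by nlinarith [hs2, hα0, hs0]
  have hξ0 : 0 < ξ := by
    rw [hξ]
    apply div_pos (by linarith) (by linarith)
  have hξ1 : ξ < 1 := by
    rw [hξ]
    rw [div_lt_one (by linarith)]
    linarith
  have heq : α * (1 - ξ) = γS3 := by
    rw [hξ, hγ']
    field_simp
    ring
  refine ⟨⟨hξ0, hξ1⟩, heq, ?_⟩
  rw [← heq, hα]
  field_simp
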